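/- Let p be an odd prime and let κ be the (p−1)×(p−1) matrix over ℤ/p²ℤ with 1's on the diagonal, entry p in position (1,2), 1's in positions (i, i+1) for 2 ≤ i ≤ p−2, entry −1 in position (p−1, 1), and 0's elsewhere. Then a·(1 + κ + κ² + ... + κ^{p−1}) = 0 for every a in A = ℤ/p²ℤ ⊕ (pℤ/p²ℤ)^{p−2}, and κ acts on A as an automorphism of order p. -/

import Mathlib

open Matrix Finset

variable {p : ℕ}

/-- the shift map: multiplication by `κ - 1` on row vectors. -/
def sh (p : ℕ) (hn : 2 ≤ p - 1) (v : Fin (p-1) → ZMod (p^2)) : Fin (p-1) → ZMod (p^2) :=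
  fun j => if (j:ℕ) = 0 then -(v ⟨p-2, by omega⟩)
    else if (j:ℕ) = 1 then (p : ZMod (p^2)) * v ⟨0, by omega⟩
    else v ⟨(j:ℕ)-1, by omega⟩

theorem vm (hn : 2 ≤ p - 1)
    (κ : Matrix (Fin (p - 1)) (Fin (p - 1)) (ZMod (p ^ 2)))
    (hκ : κ = fun i j : Fin (p - 1) =>
      if i = j then 1
      else if (j : ℕ) = (i : ℕ) + 1 then (if (i : ℕ) = 0 then (p : ZMod (p ^ 2)) else 1)
      else if (i : ℕ) = p - 2 ∧ (j : ℕ) = 0 then -1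
      else 0)
    (v : Fin (p-1) → ZMod (p^2)) : v ᵥ* κ = v + sh p hn v := by
  subst hκ
  funext j
  show ∑ i, v i * _ = _
  rcases j with ⟨jv, hj⟩
  rcases Nat.lt_or_ge jv 2 with hj2 | hj2
  · interval_cases jv
    · have key : ∀ i : Fin (p-1), v i *
          (if i = (⟨0, by omega⟩ : Fin (p-1)) then 1
            else if (0:ℕ) = (i:ℕ) + 1 then (if (i:ℕ) = 0 then (p:ZMod (p^2)) else 1)
            else if (i:ℕ) = p - 2 ∧ (0:ℕ) = 0 then -1 else 0)
          = (if i = (⟨0, by omega⟩ : Fin (p-1)) then v i else 0)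
            + (if i = (⟨p-2, by omega⟩ : Fin (p-1)) then -(v i) else 0) := by
        intro i
        simp only [Fin.ext_iff]
        split_ifs <;> first | ring1 | omega | (exfalso; omega) | simp_all | (exfalso; simp_all)
      rw [Finset.sum_congr rfl (fun i _ => key i), Finset.sum_add_distrib,
        Finset.sum_ite_eq' , Finset.sum_ite_eq']
      simp [sh]
    · have key : ∀ i : Fin (p-1), v i *
          (if i = (⟨1, by omega⟩ : Fin (p-1)) then 1
            else if (1:ℕ) = (i:ℕ) + 1 then (if (i:ℕ) = 0 then (p:ZMod (p^2)) else 1)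
            else if (i:ℕ) = p - 2 ∧ (1:ℕ) = 0 then -1 else 0)
          = (if i = (⟨1, by omega⟩ : Fin (p-1)) then v i else 0)
            + (if i = (⟨0, by omega⟩ : Fin (p-1)) then v i * (p:ZMod (p^2)) else 0) := by
        intro i
        simp only [Fin.ext_iff]
        split_ifs <;> first | ring1 | omega | (exfalso; omega) | simp_all | (exfalso; simp_all)
      rw [Finset.sum_congr rfl (fun i _ => key i), Finset.sum_add_distrib,
        Finset.sum_ite_eq' , Finset.sum_ite_eq']
      simp [sh, mul_comm]
  · have key : ∀ i : Fin (p-1), v i *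
        (if i = (⟨jv, hj⟩ : Fin (p-1)) then 1
          else if (jv:ℕ) = (i:ℕ) + 1 then (if (i:ℕ) = 0 then (p:ZMod (p^2)) else 1)
          else if (i:ℕ) = p - 2 ∧ (jv:ℕ) = 0 then -1 else 0)
        = (if i = (⟨jv, hj⟩ : Fin (p-1)) then v i else 0)
          + (if i = (⟨jv - 1, by omega⟩ : Fin (p-1)) then v i else 0) := by
      intro i
      simp only [Fin.ext_iff]
      split_ifs <;> first | ring1 | omega | (exfalso; omega) | simp_all | (exfalso; simp_all)
    rw [Finset.sum_congr rfl (fun i _ => key i), Finset.sum_add_distrib,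
      Finset.sum_ite_eq' , Finset.sum_ite_eq']
    have hx : ¬ (jv = 0) := by omega
    have hy : ¬ (jv = 1) := by omega
    simp [sh, hx, hy]

/-! ### auxiliary congruence helpers -/

lemma vc (v : Fin (p-1) → ZMod (p^2)) {a b : ℕ} {ha : a < p-1} {hb : b < p-1}
    (h : a = b) : v ⟨a, ha⟩ = v ⟨b, hb⟩ := by subst h; rfl

lemma vcneg (v : Fin (p-1) → ZMod (p^2)) {a b : ℕ} {ha : a < p-1} {hb : b < p-1}
    (h : a = b) : -v ⟨a, ha⟩ = -v ⟨b, hb⟩ := by subst h; rfl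

/-! ### The auxiliary vector `G` -/

def G (p : ℕ) (hn : 2 ≤ p - 1) (v : Fin (p-1) → ZMod (p^2)) (e : ℕ) :
    Fin (p-1) → ZMod (p^2) := fun j =>
  if (j:ℕ) = 0 then -(v ⟨p - 1 - max 1 e, by omega⟩)
  else if (j:ℕ) < e then 0
  else if (j:ℕ) = e then (p : ZMod (p^2)) * v ⟨0, by omega⟩
  else v ⟨(j:ℕ) - e, by exact lt_of_le_of_lt (Nat.sub_le _ _) j.isLt⟩

def Ef (p : ℕ) (hn : 2 ≤ p - 1) (v : Fin (p-1) → ZMod (p^2)) :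
    Fin (p-1) → ZMod (p^2) := fun j =>
  if (j:ℕ) = 0 then -((p : ZMod (p^2)) * v ⟨0, by omega⟩) else 0

section eval
variable (hn : 2 ≤ p - 1) (v : Fin (p-1) → ZMod (p^2)) (e : ℕ) (j : Fin (p-1))

lemma sh_at_zero (hj : (j:ℕ) = 0) : sh p hn v j = -(v ⟨p-2, by omega⟩) := by
  simp [sh, hj]

lemma sh_at_one (hj : (j:ℕ) = 1) : sh p hn v j = (p : ZMod (p^2)) * v ⟨0, by omega⟩ := by
  simp [sh, hj]

lemma sh_at_ge (hj : 2 ≤ (j:ℕ)) : sh p hn v j = v ⟨(j:ℕ)-1, by omega⟩ := by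
  have h0 : ¬ ((j:ℕ) = 0) := by omega
  have h1 : ¬ ((j:ℕ) = 1) := by omega
  simp [sh, h0, h1]

lemma G_at_zero (hj : (j:ℕ) = 0) :
    G p hn v e j = -(v ⟨p - 1 - max 1 e, by omega⟩) := by
  simp only [G]; rw [if_pos hj]

lemma G_at_lt (h0 : (j:ℕ) ≠ 0) (h : (j:ℕ) < e) : G p hn v e j = 0 := by
  simp only [G]; rw [if_neg h0, if_pos h]

lemma G_at_eq (h0 : (j:ℕ) ≠ 0) (h : (j:ℕ) = e) :
    G p hn v e j = (p : ZMod (p^2)) * v ⟨0, by omega⟩ := by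
  simp only [G]; rw [if_neg h0, if_neg (by omega), if_pos h]

lemma G_at_gt (h0 : (j:ℕ) ≠ 0) (h : e < (j:ℕ)) :
    G p hn v e j = v ⟨(j:ℕ) - e, by omega⟩ := by
  simp only [G]; rw [if_neg h0, if_neg (by omega), if_neg (by omega)]

lemma Ef_at_zero (hj : (j:ℕ) = 0) :
    Ef p hn v j = -((p : ZMod (p^2)) * v ⟨0, by omega⟩) := by
  simp only [Ef]; rw [if_pos hj]

lemma Ef_at_ne (hj : (j:ℕ) ≠ 0) : Ef p hn v j = 0 := by
  simp only [Ef]; rw [if_neg hj]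

end eval

/-- PA is the predicate defining membership in `A`. -/
def PA (p : ℕ) (v : Fin (p-1) → ZMod (p^2)) : Prop :=
  ∀ i : Fin (p-1), (i : ℕ) ≠ 0 → ∃ c : ZMod (p^2), v i = (p : ZMod (p^2)) * c

lemma hpp (hp0 : 0 < p) : (p : ZMod (p^2)) * (p : ZMod (p^2)) = 0 := by
  rw [← Nat.cast_mul, ← pow_two, ZMod.natCast_self]

lemma sh_eq_G_one (hn : 2 ≤ p - 1) (v : Fin (p-1) → ZMod (p^2)) :
    sh p hn v = G p hn v 1 := by
  funext j
  rcases Nat.lt_or_ge (j:ℕ) 2 with h2 | h2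
  · interval_cases h : (j:ℕ)
    · rw [sh_at_zero hn v j h, G_at_zero hn v 1 j h]
      exact vcneg v (by omega)
    · rw [sh_at_one hn v j h, G_at_eq hn v 1 j (by omega) (by omega)]
  · rw [sh_at_ge hn v j h2, G_at_gt hn v 1 j (by omega) (by omega)]

lemma sh_G (hn : 2 ≤ p - 1) (v : Fin (p-1) → ZMod (p^2)) (hv : PA p v)
    (e : ℕ) (h1 : 1 ≤ e) (h2 : e + 1 ≤ p - 2) :
    sh p hn (G p hn v e) = G p hn v (e+1) := by
  funext j
  rcases Nat.lt_or_ge (j:ℕ) 2 with hj2 | hj2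
  · interval_cases h : (j:ℕ)
    · rw [sh_at_zero hn _ j h, G_at_zero hn v (e+1) j h,
        G_at_gt hn v e ⟨p-2, by omega⟩ (by show p-2 ≠ 0; omega) (by show e < p-2; omega)]
      exact vcneg v (by show p-2-e = p-1-max 1 (e+1); omega)
    · rw [sh_at_one hn _ j h,
        G_at_zero hn v e ⟨0, by omega⟩ (by show (0:ℕ) = 0; rfl),
        G_at_lt hn v (e+1) j (by omega) (by omega)]
      obtain ⟨c, hc⟩ := hv ⟨p - 1 - max 1 e, by omega⟩ (by show p - 1 - max 1 e ≠ 0; omega)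
      rw [hc, mul_neg, ← mul_assoc, hpp (by omega), zero_mul, neg_zero]
  · rw [sh_at_ge hn _ j hj2]
    rcases Nat.lt_trichotomy ((j:ℕ) - 1) e with h | h | h
    · rw [G_at_lt hn v e ⟨(j:ℕ)-1, by omega⟩ (by show (j:ℕ)-1 ≠ 0; omega) (by show (j:ℕ)-1 < e; omega),
        G_at_lt hn v (e+1) j (by omega) (by omega)]
    · rw [G_at_eq hn v e ⟨(j:ℕ)-1, by omega⟩ (by show (j:ℕ)-1 ≠ 0; omega) (by show (j:ℕ)-1 = e; omega),
        G_at_eq hn v (e+1) j (by omega) (by omega)]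
    · rw [G_at_gt hn v e ⟨(j:ℕ)-1, by omega⟩ (by show (j:ℕ)-1 ≠ 0; omega) (by show e < (j:ℕ)-1; omega),
        G_at_gt hn v (e+1) j (by omega) (by omega)]
      exact vc v (by show (j:ℕ)-1-e = (j:ℕ)-(e+1); omega)

lemma sh_G_last (hn : 2 ≤ p - 1) (v : Fin (p-1) → ZMod (p^2)) (hv : PA p v) :
    sh p hn (G p hn v (p-2)) = Ef p hn v := by
  funext j
  rcases Nat.lt_or_ge (j:ℕ) 2 with hj2 | hj2
  · interval_cases h : (j:ℕ)
    · rw [sh_at_zero hn _ j h, Ef_at_zero hn v j h,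
        G_at_eq hn v (p-2) ⟨p-2, by omega⟩ (by show p-2 ≠ 0; omega) (by show p-2 = p-2; rfl)]
    · rw [sh_at_one hn _ j h, Ef_at_ne hn v j (by omega),
        G_at_zero hn v (p-2) ⟨0, by omega⟩ (by show (0:ℕ) = 0; rfl)]
      obtain ⟨c, hc⟩ := hv ⟨p - 1 - max 1 (p-2), by omega⟩ (by show p - 1 - max 1 (p-2) ≠ 0; omega)
      rw [hc, mul_neg, ← mul_assoc, hpp (by omega), zero_mul, neg_zero]
  · rw [sh_at_ge hn _ j hj2, Ef_at_ne hn v j (by omega),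
      G_at_lt hn v (p-2) ⟨(j:ℕ)-1, by omega⟩ (by show (j:ℕ)-1 ≠ 0; omega)
        (by show (j:ℕ)-1 < p-2; omega)]

lemma sh_Ef (hn : 2 ≤ p - 1) (v : Fin (p-1) → ZMod (p^2)) :
    sh p hn (Ef p hn v) = 0 := by
  funext j
  rcases Nat.lt_or_ge (j:ℕ) 2 with hj2 | hj2
  · interval_cases h : (j:ℕ)
    · rw [sh_at_zero hn _ j h,
        Ef_at_ne hn v ⟨p-2, by omega⟩ (by show p-2 ≠ 0; omega), neg_zero]
      rfl
    · rw [sh_at_one hn _ j h, Ef_at_zero hn v ⟨0, by omega⟩ (by show (0:ℕ) = 0; rfl),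
        mul_neg, ← mul_assoc, hpp (by omega), zero_mul, neg_zero]
      rfl
  · rw [sh_at_ge hn _ j hj2,
      Ef_at_ne hn v ⟨(j:ℕ)-1, by omega⟩ (by show (j:ℕ)-1 ≠ 0; omega)]
    rfl

lemma p_smul_G (hn : 2 ≤ p - 1) (v : Fin (p-1) → ZMod (p^2)) (hv : PA p v)
    (e : ℕ) (h1 : 1 ≤ e) (h2 : e ≤ p - 2) :
    p • (G p hn v e) = 0 := by
  funext j
  have hps : ∀ x : ZMod (p^2), p • ((p:ZMod (p^2)) * x) = 0 := by
    intro x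
    rw [nsmul_eq_mul, ← mul_assoc, hpp (by omega), zero_mul]
  rcases eq_or_ne (j:ℕ) 0 with h0 | h0
  · rw [Pi.smul_apply, G_at_zero hn v e j h0]
    obtain ⟨c, hc⟩ := hv ⟨p - 1 - max 1 e, by omega⟩ (by show p - 1 - max 1 e ≠ 0; omega)
    rw [hc, ← mul_neg, hps]
    rfl
  · rcases Nat.lt_trichotomy (j:ℕ) e with h | h | h
    · rw [Pi.smul_apply, G_at_lt hn v e j h0 h, smul_zero]; rfl
    · rw [Pi.smul_apply, G_at_eq hn v e j h0 h, hps]; rfl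
    · rw [Pi.smul_apply, G_at_gt hn v e j h0 h]
      obtain ⟨c, hc⟩ := hv ⟨(j:ℕ) - e, by omega⟩ (by show (j:ℕ) - e ≠ 0; omega)
      rw [hc, hps]; rfl

lemma p_smul_Ef (hn : 2 ≤ p - 1) (v : Fin (p-1) → ZMod (p^2)) :
    p • (Ef p hn v) = 0 := by
  funext j
  rcases eq_or_ne (j:ℕ) 0 with h0 | h0
  · rw [Pi.smul_apply, Ef_at_zero hn v j h0, smul_neg, nsmul_eq_mul, ← mul_assoc,
      hpp (by omega), zero_mul, neg_zero]
    rfl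
  · rw [Pi.smul_apply, Ef_at_ne hn v j h0, smul_zero]; rfl

lemma pv_add_Ef (hn : 2 ≤ p - 1) (v : Fin (p-1) → ZMod (p^2)) (hv : PA p v) :
    p • v + Ef p hn v = 0 := by
  funext j
  rcases eq_or_ne (j:ℕ) 0 with h0 | h0
  · have hj : j = ⟨0, by omega⟩ := Fin.ext h0
    rw [Pi.add_apply, Pi.smul_apply, Ef_at_zero hn v j h0, hj, nsmul_eq_mul,
      add_neg_cancel]
    rfl
  · obtain ⟨c, hc⟩ := hv j h0
    rw [Pi.add_apply, Pi.smul_apply, Ef_at_ne hn v j h0, hc, nsmul_eq_mul, ← mul_assoc,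
      hpp (by omega), zero_mul, add_zero]
    rfl

/-! ### linearity helpers for `vecMul` -/

lemma vecMul_sum' {ι : Type*} (s : Finset ι)
    (f : ι → Matrix (Fin (p-1)) (Fin (p-1)) (ZMod (p^2))) (v : Fin (p-1) → ZMod (p^2)) :
    v ᵥ* (∑ i ∈ s, f i) = ∑ i ∈ s, v ᵥ* f i := by
  classical
  induction s using Finset.induction_on with
  | empty => simp
  | insert _ _ h ih => rw [Finset.sum_insert h, Finset.sum_insert h, Matrix.vecMul_add, ih]

lemma vecMul_nsmul (c : ℕ) (A : Matrix (Fin (p-1)) (Fin (p-1)) (ZMod (p^2)))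
    (v : Fin (p-1) → ZMod (p^2)) : v ᵥ* (c • A) = c • (v ᵥ* A) := by
  induction c with
  | zero => simp
  | succ n ih => rw [succ_nsmul, succ_nsmul, Matrix.vecMul_add, ih]

lemma sum_split {M : Type*} [AddCommMonoid M] (k : ℕ) (F : ℕ → M) :
    ∑ m ∈ Finset.range (k+3), F m
      = F 0 + (∑ i ∈ Finset.range (k+1), F (i+1)) + F (k+2) := by
  rw [Finset.sum_range_succ, Finset.sum_range_succ']
  abel

/-- For an odd prime `p`, the matrix `κ` over `ℤ/p²ℤ` described in the paper
annihilates `A = ℤ/p²ℤ ⊕ (pℤ/p²ℤ)^{p-2}` under `1 + κ + … + κ^{p-1}`, and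
`κ` acts on `A` as an automorphism of order `p`. -/
theorem stmt_18 {p : ℕ} (hp : p.Prime) (hodd : Odd p)
    (κ : Matrix (Fin (p - 1)) (Fin (p - 1)) (ZMod (p ^ 2)))
    (hκ : κ = fun i j : Fin (p - 1) =>
      if i = j then 1
      else if (j : ℕ) = (i : ℕ) + 1 then (if (i : ℕ) = 0 then (p : ZMod (p ^ 2)) else 1)
      else if (i : ℕ) = p - 2 ∧ (j : ℕ) = 0 then -1
      else 0)
    (inA : (Fin (p - 1) → ZMod (p ^ 2)) → Prop)
    (hinA : inA = fun v => ∀ i : Fin (p - 1), (i : ℕ) ≠ 0 →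
      ∃ c : ZMod (p ^ 2), v i = (p : ZMod (p ^ 2)) * c) :
    (∀ v, inA v → Matrix.vecMul v (∑ k ∈ Finset.range p, κ ^ k) = 0) ∧
    (∀ v, inA v → inA (Matrix.vecMul v κ)) ∧
    (∀ v, inA v → Matrix.vecMul v (κ ^ p) = v) ∧
    (∃ v, inA v ∧ Matrix.vecMul v κ ≠ v) := by
  have hp3 : 3 ≤ p := by
    have h2 := hp.two_le
    rcases hodd with ⟨k, hk⟩
    omega
  have hn : 2 ≤ p - 1 := by omega
  subst hinA
  set N : Matrix (Fin (p-1)) (Fin (p-1)) (ZMod (p^2)) := κ - 1 with hN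
  have hκN : κ = N + 1 := by rw [hN, sub_add_cancel]
  have hshN : ∀ w, w ᵥ* N = sh p hn w := by
    intro w
    rw [hN, Matrix.vecMul_sub, Matrix.vecMul_one, vm hn κ hκ w, add_sub_cancel_left]
  have hexp : ∀ k : ℕ, κ ^ k = ∑ m ∈ Finset.range (k+1), k.choose m • N ^ m := by
    intro k
    rw [hκN, (Commute.one_right N).add_pow k]
    refine Finset.sum_congr rfl fun m _ => ?_
    rw [one_pow, mul_one, ← (Nat.cast_commute (k.choose m) (N ^ m)).eq, ← nsmul_eq_mul]
  have hvexp : ∀ (v : Fin (p-1) → ZMod (p^2)) (k : ℕ),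
      v ᵥ* κ ^ k = ∑ m ∈ Finset.range (k+1), k.choose m • (v ᵥ* N ^ m) := by
    intro v k
    rw [hexp k, vecMul_sum']
    exact Finset.sum_congr rfl fun m _ => vecMul_nsmul _ _ _
  have hform : ∀ (v : Fin (p-1) → ZMod (p^2)), PA p v →
      ∀ e, 1 ≤ e → e ≤ p - 2 → v ᵥ* N ^ e = G p hn v e := by
    intro v hv e h1
    induction e, h1 using Nat.le_induction with
    | base => intro _; rw [pow_one, hshN, sh_eq_G_one]
    | succ e he ih =>
      intro h2
      have hps : N ^ (e+1) = N ^ e * N := pow_succ N e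
      rw [hps, ← Matrix.vecMul_vecMul, ih (by omega), hshN, sh_G hn v hv e he (by omega)]
  have hfinal : ∀ (v : Fin (p-1) → ZMod (p^2)), PA p v →
      v ᵥ* N ^ (p-1) = Ef p hn v := by
    intro v hv
    have hps : N ^ (p-1) = N ^ (p-2) * N := by
      rw [← pow_succ]
      congr 1
      omega
    rw [hps, ← Matrix.vecMul_vecMul, hform v hv (p-2) (by omega) le_rfl, hshN,
      sh_G_last hn v hv]
  have hkill : ∀ (v : Fin (p-1) → ZMod (p^2)), PA p v →
      ∀ m, 1 ≤ m → m ≤ p - 1 → p • (v ᵥ* N ^ m) = 0 := by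
    intro v hv m h1 h2
    rcases Nat.lt_or_ge m (p-1) with h | h
    · rw [hform v hv m h1 (by omega)]
      exact p_smul_G hn v hv m h1 (by omega)
    · have hm : m = p - 1 := by omega
      rw [hm, hfinal v hv]
      exact p_smul_Ef hn v
  obtain ⟨q, hq⟩ : ∃ q, p = q + 3 := ⟨p - 3, by omega⟩
  refine ⟨?_, ?_, ?_, ?_⟩
  · -- the geometric sum annihilates A
    intro v hv
    rw [vecMul_sum']
    rw [Finset.sum_congr rfl (fun k (_ : k ∈ Finset.range p) => hvexp v k)]
    have hswap : ∀ (k m : ℕ), k ∈ Finset.range p ∧ m ∈ Finset.range (k+1)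
        ↔ k ∈ Finset.Icc m (p-1) ∧ m ∈ Finset.range p := by
      intro k m
      simp only [Finset.mem_range, Finset.mem_Icc]
      omega
    rw [Finset.sum_comm' (fun k m => hswap k m)
      (f := fun k m => k.choose m • (v ᵥ* N ^ m))]
    have h2 : ∀ m ∈ Finset.range p,
        ∑ k ∈ Finset.Icc m (p-1), k.choose m • (v ᵥ* N ^ m)
          = p.choose (m+1) • (v ᵥ* N ^ m) := by
      intro m _
      rw [← Finset.sum_smul, Nat.sum_Icc_choose, (by omega : p - 1 + 1 = p)]
    rw [Finset.sum_congr rfl h2]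
    have hr : Finset.range p = Finset.range (q+3) := by rw [hq]
    rw [hr, sum_split q (fun m => p.choose (m+1) • (v ᵥ* N ^ m))]
    have hmid : ∑ i ∈ Finset.range (q+1), p.choose (i+1+1) • (v ᵥ* N ^ (i+1)) = 0 := by
      refine Finset.sum_eq_zero fun i hi => ?_
      have hi' := Finset.mem_range.mp hi
      obtain ⟨t, ht⟩ := (hp.dvd_choose_self (by omega) (by omega) : p ∣ p.choose (i+1+1))
      rw [ht, mul_comm, mul_smul, hkill v hv (i+1) (by omega) (by omega), smul_zero]
    rw [hmid, add_zero]
    have hlast : p.choose (q+2+1) = 1 := by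
      rw [(by omega : q + 2 + 1 = p), Nat.choose_self]
    rw [hlast, one_smul]
    have hq2 : q + 2 = p - 1 := by omega
    rw [hq2, hfinal v hv, pow_zero, Matrix.vecMul_one, Nat.choose_one_right]
    exact pv_add_Ef hn v hv
  · -- stability of A
    intro v hv
    intro i hi
    rw [vm hn κ hκ v, Pi.add_apply]
    rcases eq_or_ne (i:ℕ) 1 with h1 | h1
    · obtain ⟨c, hc⟩ := hv i hi
      refine ⟨c + v ⟨0, by omega⟩, ?_⟩
      rw [sh_at_one hn v i h1, hc, mul_add]
    · obtain ⟨c, hc⟩ := hv i hi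
      obtain ⟨d, hd⟩ := hv ⟨(i:ℕ)-1, by omega⟩ (by show (i:ℕ)-1 ≠ 0; omega)
      refine ⟨c + d, ?_⟩
      rw [sh_at_ge hn v i (by omega), hc, hd, mul_add]
  · -- κ^p acts trivially on A
    intro v hv
    rw [hvexp v p]
    have hr : Finset.range (p+1) = Finset.range ((q+1)+3) := by rw [hq]
    rw [hr, sum_split (q+1) (fun m => p.choose m • (v ᵥ* N ^ m))]
    have hmid : ∑ i ∈ Finset.range (q+1+1), p.choose (i+1) • (v ᵥ* N ^ (i+1)) = 0 := by
      refine Finset.sum_eq_zero fun i hi => ?_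
      have hi' := Finset.mem_range.mp hi
      obtain ⟨t, ht⟩ := (hp.dvd_choose_self (by omega) (by omega) : p ∣ p.choose (i+1))
      rw [ht, mul_comm, mul_smul, hkill v hv (i+1) (by omega) (by omega), smul_zero]
    rw [hmid, add_zero]
    have hlast : p.choose (q+1+2) = 1 := by
      rw [(by omega : q + 1 + 2 = p), Nat.choose_self]
    rw [hlast, one_smul]
    have hNp : v ᵥ* N ^ (q+1+2) = 0 := by
      have hps : N ^ (q+1+2) = N ^ (q+1+1) * N := by
        rw [← pow_succ]
      rw [hps, ← Matrix.vecMul_vecMul]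
      have hq2 : q + 1 + 1 = p - 1 := by omega
      rw [hq2, hfinal v hv, hshN, sh_Ef]
    rw [hNp, add_zero, pow_zero, Matrix.vecMul_one, Nat.choose_zero_right, one_smul]
  · -- κ moves some element of A
    refine ⟨fun j => if (j:ℕ) = 0 then 1 else 0, fun i hi => ⟨0, by simp [hi]⟩, ?_⟩
    intro hcontra
    have h1 := congrFun hcontra ⟨1, by omega⟩
    rw [vm hn κ hκ _, Pi.add_apply,
      sh_at_one hn _ ⟨1, by omega⟩ rfl] at h1
    simp only [show ((⟨1, by omega⟩ : Fin (p-1)) : ℕ) = 1 from rfl,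
      show ((⟨0, by omega⟩ : Fin (p-1)) : ℕ) = 0 from rfl] at h1
    norm_num at h1
    haveI : NeZero (p^2) := ⟨pow_ne_zero 2 (by omega)⟩
    rw [ZMod.natCast_eq_zero_iff] at h1
    have hle := Nat.le_of_dvd (by omega) h1
    have : 3 * p ≤ p * p := Nat.mul_le_mul_right p (by omega)
    rw [pow_two] at hle
    omega
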